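/- Let f : X → X be a homeomorphism of a compact metric space and let (μ_n) be a sequence of Borel probability measures, each inner-distal with respect to f, converging in the weak* topology to a Borel probability measure μ. Then μ is inner-distal with respect to f. -/

import Mathlib

open Metric Set MeasureTheory Filter Topology

/-- The proximal cell of `x` with respect to the iterates `f ^ n`, `n : ℤ`. -/
noncomputable def proximalCell {X : Type*} [MetricSpace X] (f : Equiv.Perm X) (x : X) : Set X :=
  {y | (⨅ n : ℤ, dist ((f ^ n) x) ((f ^ n) y)) = 0}

/-- A weak* limit of inner-distal Borel probability measures is inner-distal. -/
theorem stmt12 {X : Type*} [MetricSpace X] [CompactSpace X] [MeasurableSpace X] [BorelSpace X]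
    (f : X ≃ₜ X) (μseq : ℕ → Measure X) (μ : Measure X)
    [∀ n, IsProbabilityMeasure (μseq n)] [IsProbabilityMeasure μ]
    (hinner : ∀ n : ℕ, ∀ x : X, (μseq n) (interior (proximalCell f.toEquiv x)) = 0)
    (hconv : ∀ φ : X → ℝ, Continuous φ →
      Filter.Tendsto (fun n => ∫ x, φ x ∂(μseq n)) Filter.atTop (nhds (∫ x, φ x ∂μ))) :
    ∀ x : X, μ (interior (proximalCell f.toEquiv x)) = 0 := by
  intro x
  set P : ℕ → ProbabilityMeasure X := fun n => ⟨μseq n, inferInstance⟩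
  set Q : ProbabilityMeasure X := ⟨μ, inferInstance⟩
  have hP : Tendsto P atTop (𝓝 Q) := by
    rw [ProbabilityMeasure.tendsto_iff_forall_integral_tendsto]
    intro g
    exact hconv g g.continuous
  have key := ProbabilityMeasure.le_liminf_measure_open_of_tendsto hP
    (isOpen_interior (s := proximalCell f.toEquiv x))
  have hz : Filter.liminf
      (fun n => (P n : Measure X) (interior (proximalCell f.toEquiv x))) atTop = 0 := by
    have h0 : ∀ n, (P n : Measure X) (interior (proximalCell f.toEquiv x)) = 0 :=
      fun n => hinner n x
    simp only [h0]
    exact Filter.liminf_const 0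
  rw [hz] at key
  exact le_antisymm key zero_le
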